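/- Let (Z,ρ) be a bounded quasimetric space with c ∈ Z and diam_ρ(Z) = T. Let ρ^c be the flattening of ρ with respect to c on Z^c = Z \ {c}, extended by ρ^c(x,∞) = 1/ρ(x,c) to the one-point extension of Z^c, and let (ρ^c)_∞ be the sphericalization of ρ^c with respect to the point ∞. Then for all x,y ∈ Z^c one has (ρ^c)_∞(x,y) = ρ(x,y)/((1+ρ(x,c))(1+ρ(y,c))), and the identity map (Z^c, ρ) → (Z^c, (ρ^c)_∞) is (1+T)²-bilipschitz, i.e. ρ(x,y)/(1+T)² ≤ (ρ^c)_∞(x,y) ≤ ρ(x,y) for all x,y ∈ Z^c. -/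

import Mathlib

open Set MeasureTheory
open scoped ENNReal NNReal

universe u

namespace SphFlat

/-- A `K`-quasimetric on a set `X`: symmetric, vanishing exactly on the diagonal, and
satisfying the `K`-relaxed (max-type) triangle inequality. -/
def IsQuasiMetric {X : Type*} (K : ℝ) (ρ : X → X → ℝ) : Prop :=
  1 ≤ K ∧ (∀ x y, 0 ≤ ρ x y) ∧ (∀ x y, ρ x y = ρ y x) ∧
    (∀ x y, ρ x y = 0 ↔ x = y) ∧ ∀ x y z, ρ x z ≤ K * max (ρ x y) (ρ y z)

/-- The quasimetric ball `B(x,r)`. -/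
def qball {X : Type*} (ρ : X → X → ℝ) (x : X) (r : ℝ) : Set X := {y | ρ x y < r}

/-- The diameter of a quasimetric space, as an extended nonnegative real. -/
noncomputable def qdiam {X : Type*} (ρ : X → X → ℝ) : ℝ≥0∞ :=
  ⨆ (x : X) (y : X), ENNReal.ofReal (ρ x y)

/-- A quasimetric space is bounded if the quasimetric is bounded above. -/
def QBounded {X : Type*} (ρ : X → X → ℝ) : Prop := ∃ M : ℝ, ∀ x y, ρ x y ≤ M

/-- `τ`-uniform perfectness: whenever `X \ B(x,r)` is nonempty, so is `B(x,r) \ B(x,τr)`. -/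
def UniformlyPerfectWith {X : Type*} (ρ : X → X → ℝ) (τ : ℝ) : Prop :=
  ∀ (x : X) (r : ℝ), 0 < r → (Set.univ \ qball ρ x r).Nonempty →
    (qball ρ x r \ qball ρ x (τ * r)).Nonempty

/-- Uniform perfectness (for some `τ ∈ (0,1)`). -/
def QUniformlyPerfect {X : Type*} (ρ : X → X → ℝ) : Prop :=
  ∃ τ : ℝ, τ ∈ Set.Ioo (0 : ℝ) 1 ∧ UniformlyPerfectWith ρ τ

/-- Metric doubling: there is `N` such that every ball of radius `r` is covered by at most
`N` balls of radius `r/2`. -/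
def QDoubling {X : Type*} (ρ : X → X → ℝ) : Prop :=
  ∃ N : ℕ, ∀ (x : X) (r : ℝ), ∃ s : Finset X, s.card ≤ N ∧
    qball ρ x r ⊆ ⋃ y ∈ s, qball ρ y (r / 2)

/-- The cross ratio `r(a,b,c,d) = ρ(a,c)ρ(b,d) / (ρ(a,b)ρ(c,d))`. -/
noncomputable def crossRatio {X : Type*} (ρ : X → X → ℝ) (a b c d : X) : ℝ :=
  ρ a c * ρ b d / (ρ a b * ρ c d)

/-- `θ` is a homeomorphism from `[0,∞)` onto `[0,∞)`. -/
def ControlHomeo (θ : ℝ → ℝ) : Prop :=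
  θ 0 = 0 ∧ StrictMonoOn θ (Set.Ici 0) ∧ ContinuousOn θ (Set.Ici 0) ∧
    Set.SurjOn θ (Set.Ici 0) (Set.Ici 0)

/-- `f` is `θ`-quasimöbius: for every quadruple of distinct points,
`r(a,b,c,d) ≤ t` implies `r(f a, f b, f c, f d) ≤ θ t`. -/
noncomputable def QuasiMobius {X Y : Type*} (ρ : X → X → ℝ) (σ : Y → Y → ℝ)
    (f : X → Y) (θ : ℝ → ℝ) : Prop :=
  ∀ a b c d : X, a ≠ b → a ≠ c → a ≠ d → b ≠ c → b ≠ d → c ≠ d →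
    ∀ t : ℝ, crossRatio ρ a b c d ≤ t → crossRatio σ (f a) (f b) (f c) (f d) ≤ θ t

/-- `f` is `(h,H)`-weakly quasimöbius. -/
noncomputable def WeaklyQuasiMobius {X Y : Type*} (ρ : X → X → ℝ) (σ : Y → Y → ℝ)
    (f : X → Y) (h H : ℝ) : Prop :=
  ∀ a b c d : X, a ≠ b → a ≠ c → a ≠ d → b ≠ c → b ≠ d → c ≠ d →
    crossRatio ρ a b c d ≤ h → crossRatio σ (f a) (f b) (f c) (f d) ≤ H

/-- `f` is `η`-quasisymmetric. -/
def QuasiSymmetric {X Y : Type*} (ρ : X → X → ℝ) (σ : Y → Y → ℝ)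
    (f : X → Y) (η : ℝ → ℝ) : Prop :=
  ∀ (x a b : X) (t : ℝ), 0 < t → ρ x a ≤ t * ρ x b → σ (f x) (f a) ≤ η t * σ (f x) (f b)

/-- `μ` is a doubling measure with constant `C` on the quasimetric space `(X,ρ)`:
`0 < μ(B(x,2r)) ≤ C μ(B(x,r)) < ∞` for all balls. -/
def QDoublingMeasure {X : Type*} [MeasurableSpace X] (ρ : X → X → ℝ)
    (μ : Measure X) (C : ℝ) : Prop :=
  ∀ (x : X) (r : ℝ), 0 < r → 0 < μ (qball ρ x r) ∧ μ (qball ρ x (2 * r)) < ⊤ ∧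
    μ (qball ρ x (2 * r)) ≤ ENNReal.ofReal C * μ (qball ρ x r)

/-- Ahlfors `Q`-regularity with constant `C` of a set function `m` on the quasimetric
space `(X,ρ)`: `C⁻¹ R^Q ≤ m(B(x,R)) ≤ C R^Q` for `0 < R < diam X`. -/
def QAhlfors {X : Type*} (ρ : X → X → ℝ) (m : Set X → ℝ≥0∞) (Q C : ℝ) : Prop :=
  ∀ (x : X) (r : ℝ), 0 < r → ENNReal.ofReal r < qdiam ρ →
    ENNReal.ofReal (C⁻¹ * r ^ Q) ≤ m (qball ρ x r) ∧ m (qball ρ x r) ≤ ENNReal.ofReal (C * r ^ Q)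

/-- The sphericalization `ρ_a` of `ρ` with respect to the base point `a`, on the one-point
extension `Ẋ = X ∪ {∞}` (modelled as `Option X`, with `none = ∞`). -/
noncomputable def spher {X : Type*} (ρ : X → X → ℝ) (a : X) : Option X → Option X → ℝ
  | some x, some y => ρ x y / ((1 + ρ x a) * (1 + ρ y a))
  | some x, none => 1 / (1 + ρ x a)
  | none, some y => 1 / (1 + ρ y a)
  | none, none => 0

/-- The flattening `ρ^c` of `ρ` with respect to `c`, on `X^c = X \ {c}`. -/
noncomputable def flat {X : Type*} (ρ : X → X → ℝ) (c : X) (x y : {z : X // z ≠ c}) : ℝ :=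
  ρ x.1 y.1 / (ρ x.1 c * ρ y.1 c)

/-- The sphericalization (with respect to the added point `∞`, where `ρ^c(x,∞) = 1/ρ(x,c)`)
of the flattening `ρ^c`, evaluated at two points of `X \ {c}`. -/
noncomputable def spherFlat {X : Type*} (ρ : X → X → ℝ) (c : X) (x y : X) : ℝ :=
  (ρ x y / (ρ x c * ρ y c)) / ((1 + 1 / ρ x c) * (1 + 1 / ρ y c))

/-- Lemma 3.3: for a bounded quasimetric space `(Z,ρ)` with `diam Z = T` and
`c ∈ Z`, one has `(ρ^c)_∞(x,y) = ρ(x,y)/((1+ρ(x,c))(1+ρ(y,c)))`, and the identity map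
`(Z^c,ρ) → (Z^c,(ρ^c)_∞)` is `(1+T)²`-bilipschitz. -/
theorem statement_5 {X : Type*} (K T : ℝ) (ρ : X → X → ℝ) (hρ : IsQuasiMetric K ρ) (c : X)
    (hT : IsLUB {t : ℝ | ∃ x y : X, t = ρ x y} T) :
    ∀ x y : X, x ≠ c → y ≠ c →
      spherFlat ρ c x y = ρ x y / ((1 + ρ x c) * (1 + ρ y c)) ∧
      ρ x y / (1 + T) ^ 2 ≤ spherFlat ρ c x y ∧ spherFlat ρ c x y ≤ ρ x y := by
  intro x y hx hy
  obtain ⟨hK, hnn, hsym, hzero, htri⟩ := hρ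
  have hxc : 0 < ρ x c := lt_of_le_of_ne (hnn x c) (fun h => hx ((hzero x c).1 h.symm))
  have hyc : 0 < ρ y c := lt_of_le_of_ne (hnn y c) (fun h => hy ((hzero y c).1 h.symm))
  have heq : spherFlat ρ c x y = ρ x y / ((1 + ρ x c) * (1 + ρ y c)) := by
    unfold spherFlat
    field_simp
    ring
  have hxT : ρ x c ≤ T := hT.1 ⟨x, c, rfl⟩
  have hyT : ρ y c ≤ T := hT.1 ⟨y, c, rfl⟩
  have hxyT : ρ x y ≤ T := hT.1 ⟨x, y, rfl⟩
  have h1x : (1:ℝ) ≤ 1 + ρ x c := by linarith [hnn x c]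
  have h1y : (1:ℝ) ≤ 1 + ρ y c := by linarith [hnn y c]
  have hxyn := hnn x y
  refine ⟨heq, ?_, ?_⟩
  · rw [heq]
    apply div_le_div_of_nonneg_left hxyn (by positivity)
    have : (1 + T)^2 = (1+T)*(1+T) := sq (1+T)
    rw [this]
    exact mul_le_mul (by linarith) (by linarith) (by linarith) (by linarith)
  · rw [heq]
    calc ρ x y / ((1 + ρ x c) * (1 + ρ y c)) ≤ ρ x y / 1 :=
          div_le_div_of_nonneg_left hxyn one_pos (by nlinarith)
      _ = ρ x y := div_one _


end SphFlat
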